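/- Let X be a finite set with N elements, A : X × X → ℝ a symmetric matrix, and Ψ an N × m real matrix with linearly independent columns, such that A is conditionally positive definite with respect to Ψ (aᵀAa > 0 for every nonzero a with Ψᵀa = 0). Then for every data vector y ∈ ℝ^X there exist unique vectors a ∈ ℝ^X and b ∈ ℝ^m such that Ψᵀa = 0 and Aa + Ψb = y; i.e., the constrained kernel interpolation problem is uniquely solvable. -/

import Mathlib

/-- For a symmetric matrix `A` that is conditionally positive definite with
respect to `Ψ` (with linearly independent columns), the constrained kernel interpolation
problem `Ψᵀa = 0`, `Aa + Ψb = y` has a unique solution `(a, b)` for every data vector `y`. -/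
theorem kernel_interpolation_unique_solvability
    {X : Type*} [Fintype X] [DecidableEq X] (N m : ℕ)
    (hN : Fintype.card X = N)
    (A : Matrix X X ℝ) (hA : A.IsSymm)
    (Ψ : Matrix X (Fin m) ℝ)
    (hΨ : LinearIndependent ℝ (fun k : Fin m => (fun ξ : X => Ψ ξ k)))
    (hcpd : ∀ a : X → ℝ, a ≠ 0 → Ψ.transpose.mulVec a = 0 →
      0 < dotProduct a (A.mulVec a)) :
    ∀ y : X → ℝ, ∃! p : (X → ℝ) × (Fin m → ℝ),
      Ψ.transpose.mulVec p.1 = 0 ∧ A.mulVec p.1 + Ψ.mulVec p.2 = y := by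
  -- The linear map T(a,b) = (Aa + Ψb, Ψᵀa)
  set T : ((X → ℝ) × (Fin m → ℝ)) →ₗ[ℝ] ((X → ℝ) × (Fin m → ℝ)) :=
    LinearMap.prod
      (A.mulVecLin.comp (LinearMap.fst ℝ _ _) + Ψ.mulVecLin.comp (LinearMap.snd ℝ _ _))
      (Ψ.transpose.mulVecLin.comp (LinearMap.fst ℝ _ _)) with hT
  have hTapp : ∀ p : (X → ℝ) × (Fin m → ℝ),
      T p = (A.mulVec p.1 + Ψ.mulVec p.2, Ψ.transpose.mulVec p.1) := by
    intro p; rfl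
  have hinj : Function.Injective T := by
    rw [← LinearMap.ker_eq_bot, LinearMap.ker_eq_bot']
    rintro ⟨a, b⟩ hp
    rw [hTapp] at hp
    have h1 : A.mulVec a + Ψ.mulVec b = 0 := congrArg Prod.fst hp
    have h2 : Ψ.transpose.mulVec a = 0 := congrArg Prod.snd hp
    -- a ⬝ (Aa + Ψb) = 0
    have hdot : dotProduct a (A.mulVec a) + dotProduct a (Ψ.mulVec b) = 0 := by
      have := congrArg (dotProduct a) h1
      simpa [dotProduct_add] using this
    have hΨb : dotProduct a (Ψ.mulVec b) = 0 := by
      rw [Matrix.dotProduct_mulVec, ← Matrix.mulVec_transpose, h2, zero_dotProduct]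
    have hAa : dotProduct a (A.mulVec a) = 0 := by linarith
    have ha : a = 0 := by
      by_contra hne
      exact absurd hAa (ne_of_gt (hcpd a hne h2))
    have hb : b = 0 := by
      have hΨb0 : Ψ.mulVec b = 0 := by
        have := h1
        rw [ha, Matrix.mulVec_zero, zero_add] at this
        exact this
      have hsum : ∑ k : Fin m, b k • (fun ξ : X => Ψ ξ k) = 0 := by
        funext ξ
        have := congrFun hΨb0 ξ
        simpa [Matrix.mulVec, dotProduct, Finset.sum_apply, mul_comm] using this
      have := (Fintype.linearIndependent_iff.mp hΨ) b hsum
      funext k; exact this k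
    simp [ha, hb, Prod.ext_iff]
  have hsurj : Function.Surjective T :=
    (LinearMap.injective_iff_surjective).mp hinj
  intro y
  obtain ⟨p, hp⟩ := hsurj (y, 0)
  rw [hTapp] at hp
  refine ⟨p, ⟨congrArg Prod.snd hp, congrArg Prod.fst hp⟩, ?_⟩
  rintro q ⟨hq1, hq2⟩
  apply hinj
  rw [hTapp, hTapp, hp, hq1, hq2]
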